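/- For every n ≥ 1, a permutation π ∈ S_{n+1} is 1-almost-increasing if and only if there exist a 1-almost-increasing permutation σ ∈ S_n and indices i, j ∈ {1, 2} such that π = ρ_{i,j}(σ). -/

import Mathlib

/-- `w` contains the pattern `p` (both given in one-line notation):
there is a subsequence of `w` whose entries are in the same relative order
as the entries of `p`. -/
def ContainsPattern (w p : List ℕ) : Prop :=
  ∃ s : List ℕ, s.Sublist w ∧ s.length = p.length ∧
    ∀ a b : ℕ, a < p.length → b < p.length →
      (s.getD a 0 < s.getD b 0 ↔ p.getD a 0 < p.getD b 0)

/-- `w` avoids the pattern `p`. -/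
def Avoids (w p : List ℕ) : Prop := ¬ ContainsPattern w p

/-- `w` is the one-line notation of a permutation of `{1, …, n}`. -/
def IsPermList (n : ℕ) (w : List ℕ) : Prop := w.Perm (List.range' 1 n)

/-- A permutation is rectangular if it avoids 2413, 2431, 4213 and 4231. -/
def Rectangular (w : List ℕ) : Prop :=
  Avoids w [2,4,1,3] ∧ Avoids w [2,4,3,1] ∧ Avoids w [4,2,1,3] ∧ Avoids w [4,2,3,1]

/-- A permutation is evil-avoiding if it avoids 2413, 4132, 4213 and 3214. -/
def EvilAvoiding (w : List ℕ) : Prop :=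
  Avoids w [2,4,1,3] ∧ Avoids w [4,1,3,2] ∧ Avoids w [4,2,1,3] ∧ Avoids w [3,2,1,4]

/-- The number of recoils of `w`: the number of values `i ∈ {1,…,n-1}`
that occur after `i+1` in the one-line notation `w`. -/
def recoils (w : List ℕ) : ℕ :=
  ((Finset.Icc 1 (w.length - 1)).filter (fun i => w.idxOf (i+1) < w.idxOf i)).card

/-- The insertion operator ρ_{i,j} (with 1-indexed position `j`): increment by 1
every value of `w` that is ≥ i, then insert the value `i` in position `j`. -/
def insOp (i j : ℕ) (w : List ℕ) : List ℕ :=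
  List.insertIdx (w.map (fun v => if i ≤ v then v + 1 else v)) (j-1) i

/-- A permutation is 1-almost-increasing if it avoids 4321, 4312, 3421 and 3412. -/
def AlmostIncreasing (w : List ℕ) : Prop :=
  Avoids w [4,3,2,1] ∧ Avoids w [4,3,1,2] ∧ Avoids w [3,4,2,1] ∧ Avoids w [3,4,1,2]

def Bad (w : List ℕ) : Prop :=
  ∃ a b c d : ℕ, [a,b,c,d].Sublist w ∧ c < a ∧ d < a ∧ c < b ∧ d < b

lemma bad_mono {l w : List ℕ} (h : l.Sublist w) : Bad l → Bad w := by
  rintro ⟨a,b,c,d,hs,h1,h2,h3,h4⟩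
  exact ⟨a,b,c,d, hs.trans h, h1,h2,h3,h4⟩

lemma bad_map {l : List ℕ} {f : ℕ → ℕ} (hf : Monotone f) :
    Bad (l.map f) → Bad l := by
  rintro ⟨a,b,c,d,hs,h1,h2,h3,h4⟩
  obtain ⟨l', hl', heq⟩ := List.sublist_map_iff.mp hs
  have key : ∀ x y : ℕ, f x < f y → x < y := by
    intro x y hxy
    by_contra hxy'
    exact absurd (hf (le_of_not_gt hxy')) (not_le.2 hxy)
  match l', hl', heq with
  | [a',b',c',d'], hl', heq =>
    simp only [List.map_cons, List.map_nil, List.cons.injEq, and_true] at heq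
    obtain ⟨ha, hb, hc, hd⟩ := heq
    subst ha hb hc hd
    exact ⟨a',b',c',d', hl', key _ _ h1, key _ _ h2, key _ _ h3, key _ _ h4⟩

lemma pair_sublist {a b : ℕ} : ∀ {l : List ℕ}, a ∈ l → b ∈ l → a ≠ b →
    [a,b].Sublist l ∨ [b,a].Sublist l := by
  intro l
  induction l with
  | nil => simp
  | cons x t ih =>
    intro ha hb hab
    rcases List.mem_cons.mp ha with rfl | ha'
    · left
      have hb' : b ∈ t := by
        rcases List.mem_cons.mp hb with h | h
        · exact absurd h.symm hab
        · exact h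
      exact (List.singleton_sublist.mpr hb').cons₂ a
    · rcases List.mem_cons.mp hb with rfl | hb'
      · exact Or.inr ((List.singleton_sublist.mpr ha').cons₂ b)
      · rcases ih ha' hb' hab with h | h
        · exact Or.inl (h.cons x)
        · exact Or.inr (h.cons x)

lemma contains_of_bad {w : List ℕ} (hnd : w.Nodup) (hb : Bad w) :
    ¬ AlmostIncreasing w := by
  obtain ⟨a,b,c,d,hs,hca,hda,hcb,hdb⟩ := hb
  have hnds := hs.nodup hnd
  have hab : a ≠ b := by simp [List.nodup_cons] at hnds; tauto
  have hcd : c ≠ d := by simp [List.nodup_cons] at hnds; tauto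
  rintro ⟨h1,h2,h3,h4⟩
  rcases hab.lt_or_gt with h | h <;> rcases hcd.lt_or_gt with h' | h'
  · exact h4 ⟨[a,b,c,d], hs, rfl, by
      intro x y hx hy; simp only [List.length_cons, List.length_nil] at hx hy
      interval_cases x <;> interval_cases y <;>
        simp [List.getD_cons_zero, List.getD_cons_succ] <;> omega⟩
  · exact h3 ⟨[a,b,c,d], hs, rfl, by
      intro x y hx hy; simp only [List.length_cons, List.length_nil] at hx hy
      interval_cases x <;> interval_cases y <;>
        simp [List.getD_cons_zero, List.getD_cons_succ] <;> omega⟩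
  · exact h2 ⟨[a,b,c,d], hs, rfl, by
      intro x y hx hy; simp only [List.length_cons, List.length_nil] at hx hy
      interval_cases x <;> interval_cases y <;>
        simp [List.getD_cons_zero, List.getD_cons_succ] <;> omega⟩
  · exact h1 ⟨[a,b,c,d], hs, rfl, by
      intro x y hx hy; simp only [List.length_cons, List.length_nil] at hx hy
      interval_cases x <;> interval_cases y <;>
        simp [List.getD_cons_zero, List.getD_cons_succ] <;> omega⟩

lemma bad_of_contains {w p : List ℕ}
    (hp : p = [4,3,2,1] ∨ p = [4,3,1,2] ∨ p = [3,4,2,1] ∨ p = [3,4,1,2])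
    (h : ContainsPattern w p) : Bad w := by
  rcases hp with rfl | rfl | rfl | rfl <;>
  · obtain ⟨s, hs, hlen, hrel⟩ := h
    have hl4 : s.length = 4 := by simpa using hlen
    rcases s with _|⟨a,_|⟨b,_|⟨c,_|⟨d,_|⟨e,s⟩⟩⟩⟩⟩ <;> simp at hl4
    have h20 := hrel 2 0 (by norm_num) (by norm_num)
    have h30 := hrel 3 0 (by norm_num) (by norm_num)
    have h21 := hrel 2 1 (by norm_num) (by norm_num)
    have h31 := hrel 3 1 (by norm_num) (by norm_num)
    simp [List.getD_cons_zero, List.getD_cons_succ] at h20 h30 h21 h31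
    exact ⟨a,b,c,d, hs, by omega, by omega, by omega, by omega⟩

lemma ai_iff_not_bad {w : List ℕ} (hnd : w.Nodup) :
    AlmostIncreasing w ↔ ¬ Bad w := by
  constructor
  · intro h hb; exact contains_of_bad hnd hb h
  · intro hnb
    exact ⟨fun hc => hnb (bad_of_contains (Or.inl rfl) hc),
           fun hc => hnb (bad_of_contains (Or.inr (Or.inl rfl)) hc),
           fun hc => hnb (bad_of_contains (Or.inr (Or.inr (Or.inl rfl))) hc),
           fun hc => hnb (bad_of_contains (Or.inr (Or.inr (Or.inr rfl))) hc)⟩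

lemma f_mono (i : ℕ) : Monotone (fun v : ℕ => if i ≤ v then v + 1 else v) := by
  intro x y h; dsimp only; split_ifs <;> omega

lemma g_mono (i : ℕ) : Monotone (fun v : ℕ => if i < v then v - 1 else v) := by
  intro x y h; dsimp only; split_ifs <;> omega

lemma map_sub_one_range' (s n : ℕ) :
    (List.range' (s+1) n).map (fun x => x - 1) = List.range' s n := by
  induction n generalizing s with
  | zero => simp
  | succ n ih =>
    rw [List.range'_succ, List.range'_succ]
    simp only [List.map_cons, Nat.add_sub_cancel]
    rw [ih (s+1)]

lemma fg_id (i : ℕ) {l : List ℕ} (h : ∀ x ∈ l, x ≠ i) :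
    (l.map (fun x => if i < x then x - 1 else x)).map
      (fun v => if i ≤ v then v + 1 else v) = l := by
  induction l with
  | nil => simp
  | cons x t ih =>
    have hx := h x List.mem_cons_self
    simp only [List.map_cons, ih (fun y hy => h y (List.mem_cons_of_mem _ hy)),
      List.cons.injEq, and_true]
    split_ifs <;> omega

lemma perm_build (n i : ℕ) (hi : i = 1 ∨ i = 2) (hn : 1 ≤ n) {w : List ℕ}
    (hperm : IsPermList (n+1) w) :
    IsPermList n ((w.erase i).map (fun x => if i < x then x - 1 else x)) := by
  unfold IsPermList at *
  have h1 : (w.erase i).Perm ((List.range' 1 (n+1)).erase i) := hperm.erase i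
  have h2 := h1.map (fun x => if i < x then x - 1 else x)
  refine h2.trans ?_
  have key : ((List.range' 1 (n+1)).erase i).map (fun x => if i < x then x - 1 else x)
      = List.range' 1 n := by
    rcases hi with rfl | rfl
    · rw [List.range'_succ, List.erase_cons_head]
      have : ∀ x ∈ List.range' (1+1) n, (if 1 < x then x - 1 else x) = x - 1 := by
        intro x hx
        rw [List.mem_range'_1] at hx
        rw [if_pos (by omega)]
      rw [List.map_congr_left this, map_sub_one_range']
    · obtain ⟨m, rfl⟩ : ∃ m, n = m + 1 := ⟨n - 1, by omega⟩
      rw [List.range'_succ, List.range'_succ]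
      rw [show (1:ℕ)+1 = 2 by rfl]
      rw [List.erase_cons, if_neg (by norm_num), List.erase_cons_head]
      simp only [List.map_cons]
      rw [if_neg (by norm_num)]
      have : ∀ x ∈ List.range' (2+1) m, (if 2 < x then x - 1 else x) = x - 1 := by
        intro x hx
        rw [List.mem_range'_1] at hx
        rw [if_pos (by omega)]
      rw [List.map_congr_left this, map_sub_one_range']
      rw [List.range'_succ]
  rw [key]

lemma forward_build (n i : ℕ) (hi : i = 1 ∨ i = 2) (hn : 1 ≤ n) {w : List ℕ}
    (hperm : IsPermList (n+1) w) (hnb : ¬ Bad w) :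
    IsPermList n ((w.erase i).map (fun x => if i < x then x - 1 else x)) ∧
    AlmostIncreasing ((w.erase i).map (fun x => if i < x then x - 1 else x)) ∧
    ((w.erase i).map (fun x => if i < x then x - 1 else x)).map
      (fun v => if i ≤ v then v + 1 else v) = w.erase i := by
  have hnd : w.Nodup := hperm.nodup_iff.mpr (List.nodup_range' (s := 1) (n := n+1))
  have hp := perm_build n i hi hn hperm
  have hvnd : ((w.erase i).map (fun x => if i < x then x - 1 else x)).Nodup :=
    hp.nodup_iff.mpr (List.nodup_range' (s := 1) (n := n))
  refine ⟨hp, ?_, fg_id i (fun x hx => ((hnd.mem_erase_iff).mp hx).1)⟩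
  rw [ai_iff_not_bad hvnd]
  intro hb
  exact hnb (bad_mono (List.erase_sublist (a := i) (l := w)) (bad_map (g_mono i) hb))


/-- For every `n ≥ 1`, a permutation `π ∈ S_{n+1}` is 1-almost-increasing iff there
exist a 1-almost-increasing permutation `σ ∈ S_n` and indices `i, j ∈ {1, 2}` such
that `π = ρ_{i,j}(σ)`. -/
theorem almostIncreasing_iff_insOp (n : ℕ) (hn : 1 ≤ n) (w : List ℕ)
    (hperm : IsPermList (n + 1) w) :
    AlmostIncreasing w ↔
      ∃ v : List ℕ, IsPermList n v ∧ AlmostIncreasing v ∧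
        ∃ i ∈ ({1, 2} : Set ℕ), ∃ j ∈ ({1, 2} : Set ℕ), w = insOp i j v := by
  have hnd : w.Nodup := hperm.nodup_iff.mpr (List.nodup_range' (s := 1) (n := n+1))
  have hlen : w.length = n + 1 := by simpa using hperm.length_eq
  have hmem : ∀ x ∈ w, 1 ≤ x := by
    intro x hx
    have := hperm.mem_iff.mp hx
    rw [List.mem_range'_1] at this
    omega
  constructor
  · intro hai
    have hnb : ¬ Bad w := (ai_iff_not_bad hnd).mp hai
    have h1w : 1 ∈ w := hperm.mem_iff.mpr (by rw [List.mem_range'_1]; omega)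
    have h2w : 2 ∈ w := hperm.mem_iff.mpr (by rw [List.mem_range'_1]; omega)
    rcases w with _ | ⟨x, w'⟩
    · simp at hlen
    rcases w' with _ | ⟨y, t⟩
    · simp at hlen; omega
    have hkey : x = 1 ∨ y = 1 ∨ x = 2 ∨ y = 2 := by
      by_contra hk
      push_neg at hk
      obtain ⟨hx1, hy1, hx2, hy2⟩ := hk
      have h1t : 1 ∈ t := by
        rcases List.mem_cons.mp h1w with h | h
        · exact absurd h.symm hx1
        rcases List.mem_cons.mp h with h | h
        · exact absurd h.symm hy1
        · exact h
      have h2t : 2 ∈ t := by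
        rcases List.mem_cons.mp h2w with h | h
        · exact absurd h.symm hx2
        rcases List.mem_cons.mp h with h | h
        · exact absurd h.symm hy2
        · exact h
      have hx3 : 3 ≤ x := by
        have := hmem x List.mem_cons_self; omega
      have hy3 : 3 ≤ y := by
        have := hmem y (List.mem_cons_of_mem _ List.mem_cons_self); omega
      rcases pair_sublist h1t h2t (by omega) with h | h
      · exact hnb ⟨x, y, 1, 2, (h.cons₂ y).cons₂ x, by omega, by omega, by omega, by omega⟩
      · exact hnb ⟨x, y, 2, 1, (h.cons₂ y).cons₂ x, by omega, by omega, by omega, by omega⟩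
    rcases hkey with rfl | rfl | rfl | rfl
    · obtain ⟨hp, hai', hmap⟩ := forward_build n 1 (Or.inl rfl) hn hperm hnb
      refine ⟨_, hp, hai', 1, by norm_num, 1, by norm_num, ?_⟩
      unfold insOp
      rw [hmap]
      simp [List.erase_cons_head]
    · have hx1 : x ≠ 1 := by
        have h := hnd; simp [List.nodup_cons] at h; tauto
      obtain ⟨hp, hai', hmap⟩ := forward_build n 1 (Or.inl rfl) hn hperm hnb
      refine ⟨_, hp, hai', 1, by norm_num, 2, by norm_num, ?_⟩
      unfold insOp
      rw [hmap]
      have he : (x :: 1 :: t).erase 1 = x :: t := by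
        rw [List.erase_cons, if_neg (by simpa using hx1), List.erase_cons_head]
      rw [he]
      norm_num [List.insertIdx_succ_cons]
    · obtain ⟨hp, hai', hmap⟩ := forward_build n 2 (Or.inr rfl) hn hperm hnb
      refine ⟨_, hp, hai', 2, by norm_num, 1, by norm_num, ?_⟩
      unfold insOp
      rw [hmap]
      simp [List.erase_cons_head]
    · have hx2 : x ≠ 2 := by
        have h := hnd; simp [List.nodup_cons] at h; tauto
      obtain ⟨hp, hai', hmap⟩ := forward_build n 2 (Or.inr rfl) hn hperm hnb
      refine ⟨_, hp, hai', 2, by norm_num, 2, by norm_num, ?_⟩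
      unfold insOp
      rw [hmap]
      have he : (x :: 2 :: t).erase 2 = x :: t := by
        rw [List.erase_cons, if_neg (by simpa using hx2), List.erase_cons_head]
      rw [he]
      norm_num [List.insertIdx_succ_cons]

  · rintro ⟨v, hvperm, hvai, i, hi, j, hj, rfl⟩
    simp only [Set.mem_insert_iff, Set.mem_singleton_iff] at hi hj
    have hvnd : v.Nodup := hvperm.nodup_iff.mpr (List.nodup_range' (s := 1) (n := n))
    have hvnb : ¬ Bad v := (ai_iff_not_bad hvnd).mp hvai
    have hvlen : v.length = n := by simpa using hvperm.length_eq
    have hi2 : i ≤ 2 := by rcases hi with rfl | rfl <;> omega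
    rw [ai_iff_not_bad hnd]
    rintro ⟨a,b,c,d,hs,hca,hda,hcb,hdb⟩
    have hcd : c ≠ d := by
      have h := hs.nodup hnd; simp [List.nodup_cons] at h; tauto
    have hc1 : 1 ≤ c := hmem c (hs.subset (by simp))
    have hd1 : 1 ≤ d := hmem d (hs.subset (by simp))
    rcases hj with rfl | rfl
    · rw [show insOp i 1 v = i :: v.map (fun x => if i ≤ x then x+1 else x) from by
        unfold insOp; simp] at hs
      cases hs with
      | cons _ h => exact hvnb (bad_map (f_mono i) ⟨a,b,c,d,h,hca,hda,hcb,hdb⟩)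
      | cons_cons _ h => omega
    · obtain ⟨z, t', rfl⟩ : ∃ z t', v = z :: t' := by
        rcases v with _ | ⟨z, t'⟩
        · simp at hvlen; omega
        · exact ⟨z, t', rfl⟩
      rw [show insOp i 2 (z::t') = (if i ≤ z then z+1 else z) :: i ::
            t'.map (fun x => if i ≤ x then x+1 else x) from by
          unfold insOp; simp [List.insertIdx_succ_cons]] at hs
      cases hs with
      | cons _ h =>
        cases h with
        | cons _ h2 =>
          refine hvnb (bad_map (f_mono i) ⟨a,b,c,d, ?_, hca,hda,hcb,hdb⟩)
          rw [List.map_cons]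
          exact h2.cons _
        | cons_cons _ h2 => omega
      | cons_cons _ h =>
        cases h with
        | cons _ h2 =>
          refine hvnb (bad_map (f_mono i) ⟨_,b,c,d, ?_, hca,hda,hcb,hdb⟩)
          rw [List.map_cons]
          exact h2.cons₂ _
        | cons_cons _ h2 => omega
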